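/- Under the assumptions on b and K ensuring E₊ and E₋ are increasing bijections of R with bounded jump at most 2K each (as in the Elo model with binary scores for N = 2 players), for any real numbers a < b and any u ∈ R there exist t ∈ N and a composition β = E_t ∘ ⋯ ∘ E_1, where each E_k ∈ {E₋, E₊}, such that β(u) ∈ (a, b). -/

import Mathlib

set_option maxHeartbeats 1000000

private lemma foldr_comp_apply_aux (l : List (ℝ → ℝ)) (g : ℝ → ℝ) :
    List.foldr (· ∘ ·) g l = (List.foldr (· ∘ ·) id l) ∘ g := by
  induction l with
  | nil => rfl
  | cons f t ih =>
    simp only [List.foldr_cons, ih]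
    rfl

private lemma foldr_replicate_aux (n : ℕ) (f : ℝ → ℝ) :
    List.foldr (· ∘ ·) id (List.replicate n f) = f^[n] := by
  induction n with
  | zero => rfl
  | succ n ih =>
    rw [List.replicate_succ, List.foldr_cons, ih, Function.iterate_succ']

private lemma climb_aux (g : ℝ → ℝ) (lo δ C : ℝ) (hδ : 0 < δ)
    (hstep : ∀ x, x ≤ lo → x + δ ≤ g x) (hub : ∀ x, g x < x + C)
    (v : ℝ) (hv : v ≤ lo) : ∃ n, lo < g^[n] v ∧ g^[n] v < lo + C := by
  classical
  have key : ∃ n, lo < g^[n] v := by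
    by_contra h
    push_neg at h
    have grow : ∀ n : ℕ, v + n * δ ≤ g^[n] v := by
      intro n
      induction n with
      | zero => simp
      | succ n ih =>
        have h1 := h n
        have h2 := hstep _ h1
        rw [Function.iterate_succ_apply']
        push_cast
        nlinarith
    obtain ⟨n, hn⟩ := exists_nat_gt ((lo - v) / δ)
    have h1 := grow n
    have h2 := h n
    have h3 : (lo - v) / δ * δ < (n : ℝ) * δ := by
      apply mul_lt_mul_of_pos_right hn hδ
    rw [div_mul_cancel₀ _ (ne_of_gt hδ)] at h3
    linarith
  have hn : lo < g^[Nat.find key] v := Nat.find_spec key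
  have hn' : Nat.find key ≠ 0 := by
    intro h0
    rw [h0] at hn
    simp only [Function.iterate_zero, id] at hn
    exact absurd hn (not_lt.2 hv)
  obtain ⟨m, hm⟩ := Nat.exists_eq_succ_of_ne_zero hn'
  have hmlt : ¬ lo < g^[m] v := Nat.find_min key (by omega)
  push_neg at hmlt
  refine ⟨Nat.find key, hn, ?_⟩
  rw [hm, Function.iterate_succ_apply']
  have := hub (g^[m] v)
  linarith

private lemma descend_aux (g : ℝ → ℝ) (hi δ C : ℝ) (hδ : 0 < δ)
    (hstep : ∀ x, hi ≤ x → g x ≤ x - δ) (hlb : ∀ x, x - C < g x)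
    (v : ℝ) (hv : hi ≤ v) : ∃ n, g^[n] v < hi ∧ hi - C < g^[n] v := by
  classical
  have key : ∃ n, g^[n] v < hi := by
    by_contra h
    push_neg at h
    have grow : ∀ n : ℕ, g^[n] v ≤ v - n * δ := by
      intro n
      induction n with
      | zero => simp
      | succ n ih =>
        have h1 := h n
        have h2 := hstep _ h1
        rw [Function.iterate_succ_apply']
        push_cast
        nlinarith
    obtain ⟨n, hn⟩ := exists_nat_gt ((v - hi) / δ)
    have h1 := grow n
    have h2 := h n
    have h3 : (v - hi) / δ * δ < (n : ℝ) * δ := by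
      apply mul_lt_mul_of_pos_right hn hδ
    rw [div_mul_cancel₀ _ (ne_of_gt hδ)] at h3
    linarith
  have hn : g^[Nat.find key] v < hi := Nat.find_spec key
  have hn' : Nat.find key ≠ 0 := by
    intro h0
    rw [h0] at hn
    simp only [Function.iterate_zero, id] at hn
    exact absurd hn (not_lt.2 hv)
  obtain ⟨m, hm⟩ := Nat.exists_eq_succ_of_ne_zero hn'
  have hmlt : ¬ g^[m] v < hi := Nat.find_min key (by omega)
  push_neg at hmlt
  refine ⟨Nat.find key, hn, ?_⟩
  rw [hm, Function.iterate_succ_apply']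
  have := hlb (g^[m] v)
  linarith

theorem stmt_7 (b : ℝ → ℝ) (hb_mono : StrictMono b)
    (hb_range : ∀ u, b u ∈ Set.Ioo (-1 : ℝ) 1)
    (L : ℝ) (hL : 0 ≤ L) (hb_lip : ∀ u v, |b u - b v| ≤ L * |u - v|)
    (K : ℝ) (hK : 0 < K) (hKL : K * L < 1)
    (ℓ : ℝ → ℝ) (hℓ_pos : ∀ M > 0, 0 < ℓ M)
    (hℓ_low : ∀ M > 0, ∀ u ∈ Set.Icc (-M) M, ∀ v ∈ Set.Icc (-M) M,
      ℓ M * |u - v| ≤ |b u - b v|)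
    (Ep Em : ℝ → ℝ)
    (hEp : ∀ u, Ep u = u + K * (1 - b (2 * u)))
    (hEm : ∀ u, Em u = u + K * (-1 - b (2 * u)))
    (a c : ℝ) (hac : a < c) (u : ℝ) :
    ∃ l : List (ℝ → ℝ), (∀ f ∈ l, f = Em ∨ f = Ep) ∧
      (l.foldr (· ∘ ·) id) u ∈ Set.Ioo a c := by
  classical
  set t₀ : ℝ := (a + c) / 2 with ht₀def
  set ε : ℝ := (c - a) / 2 with hεdef
  have hεpos : 0 < ε := by rw [hεdef]; linarith
  set M : ℝ := |t₀| + 4 * K with hMdef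
  have habs0 : 0 ≤ |t₀| := abs_nonneg _
  have hM2 : 0 < 2 * M := by rw [hMdef]; linarith
  set ℓ' : ℝ := ℓ (2 * M) with hℓ'def
  have hℓ'pos : 0 < ℓ' := hℓ_pos _ hM2
  set q : ℝ := max (max (1 - 2 * K * ℓ') (2 * K * L - 1)) (1 / 2 : ℝ) with hqdef
  have hq1 : q < 1 := by
    apply max_lt (max_lt ?_ ?_) (by norm_num)
    · have := mul_pos hK hℓ'pos
      linarith
    · linarith
  have hq0 : (0 : ℝ) < q := lt_of_lt_of_le (by norm_num) (le_max_right _ _)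
  have hqa : 1 - 2 * K * ℓ' ≤ q := le_trans (le_max_left _ _) (le_max_left _ _)
  have hqb : 2 * K * L - 1 ≤ q := le_trans (le_max_right _ _) (le_max_left _ _)
  -- contraction on [-M, M]
  have contr : ∀ x y : ℝ, |x| ≤ M → |y| ≤ M →
      |(x - K * b (2 * x)) - (y - K * b (2 * y))| ≤ q * |x - y| := by
    have main : ∀ x y : ℝ, |x| ≤ M → |y| ≤ M → y ≤ x →
        |(x - K * b (2 * x)) - (y - K * b (2 * y))| ≤ q * (x - y) := by
      intro x y hx hy hxy
      rcases eq_or_lt_of_le hxy with rfl | h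
      · simp
      · have hxx := abs_le.1 hx
        have hyy := abs_le.1 hy
        have hmx : 2 * x ∈ Set.Icc (-(2 * M)) (2 * M) := by
          constructor <;> linarith [hxx.1, hxx.2]
        have hmy : 2 * y ∈ Set.Icc (-(2 * M)) (2 * M) := by
          constructor <;> linarith [hyy.1, hyy.2]
        have hblt : b (2 * y) < b (2 * x) := hb_mono (by linarith)
        have hlow := hℓ_low (2 * M) hM2 (2 * x) hmx (2 * y) hmy
        have hlip := hb_lip (2 * x) (2 * y)
        have h2xy : |2 * x - 2 * y| = 2 * (x - y) := by
          rw [abs_of_pos (by linarith : (0:ℝ) < 2 * x - 2 * y)]; ring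
        have hb2 : |b (2 * x) - b (2 * y)| = b (2 * x) - b (2 * y) :=
          abs_of_pos (by linarith)
        rw [h2xy, hb2] at hlow hlip
        have hm1 : K * (ℓ' * (2 * (x - y))) ≤ K * (b (2 * x) - b (2 * y)) :=
          mul_le_mul_of_nonneg_left hlow hK.le
        have hm2 : K * (b (2 * x) - b (2 * y)) ≤ K * (L * (2 * (x - y))) :=
          mul_le_mul_of_nonneg_left hlip hK.le
        have hp1 : 0 ≤ (q - (1 - 2 * K * ℓ')) * (x - y) :=
          mul_nonneg (by linarith) (by linarith)
        have hp2 : 0 ≤ (q - (2 * K * L - 1)) * (x - y) :=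
          mul_nonneg (by linarith) (by linarith)
        rw [abs_le]
        constructor
        · nlinarith [hm2, hp2]
        · nlinarith [hm1, hp1]
    intro x y hx hy
    rcases le_total y x with h | h
    · have := main x y hx hy h
      rwa [show |x - y| = x - y from abs_of_nonneg (by linarith)]
    · have := main y x hy hx h
      rw [abs_sub_comm, abs_sub_comm x y,
        show |y - x| = y - x from abs_of_nonneg (by linarith)]
      exact this
  -- basic step bounds
  have stepP : ∀ x : ℝ, x < Ep x ∧ Ep x < x + 2 * K := by
    intro x
    have h := hb_range (2 * x)
    rw [hEp]
    constructor <;> nlinarith [h.1, h.2]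
  have stepM : ∀ x : ℝ, x - 2 * K < Em x ∧ Em x < x := by
    intro x
    have h := hb_range (2 * x)
    rw [hEm]
    constructor <;> nlinarith [h.1, h.2]
  -- continuity
  have hbC : Continuous b := by
    have hlw : LipschitzWith ⟨L, hL⟩ b := by
      apply LipschitzWith.of_dist_le_mul
      intro x y
      simp only [Real.dist_eq, NNReal.coe_mk]
      exact hb_lip x y
    exact hlw.continuous
  have hEpC : Continuous Ep := by
    have : Ep = fun x => x + K * (1 - b (2 * x)) := funext hEp
    rw [this]
    exact continuous_id.add (continuous_const.mul
      ((continuous_const.sub (hbC.comp (continuous_const.mul continuous_id)))))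
  have hEmC : Continuous Em := by
    have : Em = fun x => x + K * (-1 - b (2 * x)) := funext hEm
    rw [this]
    exact continuous_id.add (continuous_const.mul
      ((continuous_const.sub (hbC.comp (continuous_const.mul continuous_id)))))
  -- solving backwards
  have solveP : ∀ s : ℝ, ∃ x, Ep x = s ∧ s - 2 * K < x ∧ x < s := by
    intro s
    have h1 : Ep (s - 2 * K) < s := by have := (stepP (s - 2 * K)).2; linarith
    have h2 : s < Ep s := (stepP s).1
    have hsub := intermediate_value_Icc (by linarith : s - 2 * K ≤ s) hEpC.continuousOn
    obtain ⟨x, _, hfx⟩ := hsub ⟨le_of_lt h1, le_of_lt h2⟩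
    refine ⟨x, hfx, ?_, ?_⟩
    · have := (stepP x).2; linarith [hfx ▸ this]
    · have := (stepP x).1; linarith [hfx ▸ this]
  have solveM : ∀ s : ℝ, ∃ x, Em x = s ∧ s < x ∧ x < s + 2 * K := by
    intro s
    have h1 : Em s < s := (stepM s).2
    have h2 : s < Em (s + 2 * K) := by have := (stepM (s + 2 * K)).1; linarith
    have hsub := intermediate_value_Icc (by linarith : s ≤ s + 2 * K) hEmC.continuousOn
    obtain ⟨x, _, hfx⟩ := hsub ⟨le_of_lt h1, le_of_lt h2⟩
    refine ⟨x, hfx, ?_, ?_⟩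
    · have := (stepM x).2; linarith [hfx ▸ this]
    · have := (stepM x).1; linarith [hfx ▸ this]
  -- reaching any interval of length at least 2K
  have reach : ∀ v lo hi : ℝ, lo + 2 * K ≤ hi →
      ∃ l : List (ℝ → ℝ), (∀ f ∈ l, f = Em ∨ f = Ep) ∧
        (l.foldr (· ∘ ·) id) v ∈ Set.Ioo lo hi := by
    intro v lo hi hlohi
    by_cases h1 : v ≤ lo
    · have hδ : 0 < K * (1 - b (2 * lo)) := by
        nlinarith [(hb_range (2 * lo)).2]
      have hstep : ∀ x : ℝ, x ≤ lo → x + K * (1 - b (2 * lo)) ≤ Ep x := by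
        intro x hx
        have hble : b (2 * x) ≤ b (2 * lo) := hb_mono.monotone (by linarith)
        rw [hEp]
        nlinarith [mul_le_mul_of_nonneg_left hble hK.le]
      obtain ⟨n, hn1, hn2⟩ := climb_aux Ep lo _ (2 * K) hδ hstep
        (fun x => (stepP x).2) v h1
      refine ⟨List.replicate n Ep, ?_, ?_⟩
      · intro f hf
        exact Or.inr (List.eq_of_mem_replicate hf)
      · rw [foldr_replicate_aux]
        exact ⟨hn1, by linarith⟩
    · by_cases h2 : hi ≤ v
      · have hδ : 0 < K * (1 + b (2 * hi)) := by
          nlinarith [(hb_range (2 * hi)).1]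
        have hstep : ∀ x : ℝ, hi ≤ x → Em x ≤ x - K * (1 + b (2 * hi)) := by
          intro x hx
          have hble : b (2 * hi) ≤ b (2 * x) := hb_mono.monotone (by linarith)
          rw [hEm]
          nlinarith [mul_le_mul_of_nonneg_left hble hK.le]
        obtain ⟨n, hn1, hn2⟩ := descend_aux Em hi _ (2 * K) hδ hstep
          (fun x => (stepM x).1) v h2
        refine ⟨List.replicate n Em, ?_, ?_⟩
        · intro f hf
          exact Or.inl (List.eq_of_mem_replicate hf)
        · rw [foldr_replicate_aux]
          exact ⟨by linarith, hn1⟩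
      · push_neg at h1 h2
        exact ⟨[], by simp, by simpa using Set.mem_Ioo.2 ⟨h1, h2⟩⟩
  -- backward induction: amplifying target balls
  have back : ∀ k : ℕ, ∃ (t' : ℝ) (W : List (ℝ → ℝ)),
      (∀ f ∈ W, f = Em ∨ f = Ep) ∧ t₀ - 2 * K < t' ∧ t' < t₀ + 2 * K ∧
      ∀ x : ℝ, |x - t'| < min K (ε / q ^ k) →
        (W.foldr (· ∘ ·) id) x ∈ Set.Ioo a c := by
    intro k
    induction k with
    | zero =>
      refine ⟨t₀, [], by simp, by linarith, by linarith, ?_⟩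
      intro x hx
      rw [pow_zero, div_one] at hx
      have h1 : |x - t₀| < ε := lt_of_lt_of_le hx (min_le_right _ _)
      have h2 := abs_lt.1 h1
      simp only [List.foldr_nil, id_eq]
      exact ⟨by linarith [h2.1], by linarith [h2.2]⟩
    | succ k ih =>
      obtain ⟨t', W, hW, hlo, hhi, hball⟩ := ih
      have hqpow : 0 < q ^ k := pow_pos hq0 k
      have hqpow1 : 0 < q ^ (k + 1) := pow_pos hq0 (k + 1)
      have hrkey : q * min K (ε / q ^ (k + 1)) ≤ min K (ε / q ^ k) := by
        apply le_min
        · calc q * min K (ε / q ^ (k + 1)) ≤ q * K :=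
                mul_le_mul_of_nonneg_left (min_le_left _ _) hq0.le
            _ ≤ 1 * K := mul_le_mul_of_nonneg_right hq1.le hK.le
            _ = K := one_mul K
        · calc q * min K (ε / q ^ (k + 1)) ≤ q * (ε / q ^ (k + 1)) :=
                mul_le_mul_of_nonneg_left (min_le_right _ _) hq0.le
            _ = ε / q ^ k := by
                rw [pow_succ]
                field_simp
      have hminK : min K (ε / q ^ (k + 1)) ≤ K := min_le_left _ _
      rcases le_total t₀ t' with hcase | hcase
      · obtain ⟨xs, hEpxs, hxs1, hxs2⟩ := solveP t'
        refine ⟨xs, W ++ [Ep], ?_, by linarith, by linarith, ?_⟩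
        · intro f hf
          rcases List.mem_append.1 hf with h | h
          · exact hW f h
          · simp only [List.mem_singleton] at h
            exact Or.inr h
        · intro x hx
          have hxabs := abs_lt.1 hx
          have hxsM : |xs| ≤ M := by
            rw [abs_le]
            constructor <;> [linarith [neg_abs_le t₀]; linarith [le_abs_self t₀]]
          have hxM : |x| ≤ M := by
            rw [abs_le]
            constructor <;>
              [linarith [neg_abs_le t₀, hxabs.1]; linarith [le_abs_self t₀, hxabs.2]]
          have hcon := contr x xs hxM hxsM
          have hdiff : Ep x - Ep xs = (x - K * b (2 * x)) - (xs - K * b (2 * xs)) := by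
            rw [hEp, hEp]; ring
          have hcon2 : |Ep x - t'| ≤ q * |x - xs| := by
            rw [← hEpxs, hdiff]
            exact hcon
          have hlt : |Ep x - t'| < min K (ε / q ^ k) := by
            calc |Ep x - t'| ≤ q * |x - xs| := hcon2
              _ < q * min K (ε / q ^ (k + 1)) := by
                  exact mul_lt_mul_of_pos_left hx hq0
              _ ≤ min K (ε / q ^ k) := hrkey
          have := hball (Ep x) hlt
          rw [List.foldr_append, List.foldr_cons, List.foldr_nil,
            foldr_comp_apply_aux]
          simpa using this
      · obtain ⟨xs, hEmxs, hxs1, hxs2⟩ := solveM t'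
        refine ⟨xs, W ++ [Em], ?_, by linarith, by linarith, ?_⟩
        · intro f hf
          rcases List.mem_append.1 hf with h | h
          · exact hW f h
          · simp only [List.mem_singleton] at h
            exact Or.inl h
        · intro x hx
          have hxabs := abs_lt.1 hx
          have hxsM : |xs| ≤ M := by
            rw [abs_le]
            constructor <;> [linarith [neg_abs_le t₀]; linarith [le_abs_self t₀]]
          have hxM : |x| ≤ M := by
            rw [abs_le]
            constructor <;>
              [linarith [neg_abs_le t₀, hxabs.1]; linarith [le_abs_self t₀, hxabs.2]]
          have hcon := contr x xs hxM hxsM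
          have hdiff : Em x - Em xs = (x - K * b (2 * x)) - (xs - K * b (2 * xs)) := by
            rw [hEm, hEm]; ring
          have hcon2 : |Em x - t'| ≤ q * |x - xs| := by
            rw [← hEmxs, hdiff]
            exact hcon
          have hlt : |Em x - t'| < min K (ε / q ^ k) := by
            calc |Em x - t'| ≤ q * |x - xs| := hcon2
              _ < q * min K (ε / q ^ (k + 1)) := by
                  exact mul_lt_mul_of_pos_left hx hq0
              _ ≤ min K (ε / q ^ k) := hrkey
          have := hball (Em x) hlt
          rw [List.foldr_append, List.foldr_cons, List.foldr_nil,
            foldr_comp_apply_aux]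
          simpa using this
  -- conclusion
  obtain ⟨k, hk⟩ := exists_pow_lt_of_lt_one (div_pos hεpos hK) hq1
  have hqpow : 0 < q ^ k := pow_pos hq0 k
  have hKle : K ≤ ε / q ^ k := by
    rw [le_div_iff₀ hqpow]
    have h1 : K * q ^ k < K * (ε / K) := mul_lt_mul_of_pos_left hk hK
    have h2 : K * (ε / K) = ε := by field_simp
    linarith
  obtain ⟨t', W, hW, _, _, hball⟩ := back k
  obtain ⟨V, hV, hVmem⟩ := reach u (t' - K) (t' + K) (by linarith)
  refine ⟨W ++ V, ?_, ?_⟩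
  · intro f hf
    rcases List.mem_append.1 hf with h | h
    · exact hW f h
    · exact hV f h
  · rw [List.foldr_append, foldr_comp_apply_aux]
    apply hball
    rw [min_eq_left hKle]
    rw [abs_lt]
    exact ⟨by linarith [hVmem.1], by linarith [hVmem.2]⟩
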